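/- Let d ≥ 1 and let α, β be commuting variables. Define c_{d+1} = ∏_{i=0}^{d} (iα + (d-i)β) = (dα)((d-1)α + β)⋯(α + (d-1)β)(dβ). Then c_{d+1}, viewed as a polynomial in the elementary symmetric functions s = α + β and p = αβ, has all coefficients nonnegative, and the coefficient of p·s^{d-1} is strictly positive. -/

import Mathlib

open MvPolynomial

/-- The top Chern class `c_{d+1}(Sym^d S^*) = ∏_{i=0}^{d} (iα + (d-i)β)` via the splitting
principle, with `α = X 0`, `β = X 1`. -/
noncomputable def cTop (d : ℕ) : MvPolynomial (Fin 2) ℤ :=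
  ∏ i ∈ Finset.range (d + 1), (C (i : ℤ) * X 0 + C ((d : ℤ) - (i : ℤ)) * X 1)

namespace ChernAux

noncomputable def σ : Fin 2 → MvPolynomial (Fin 2) ℤ :=
  fun k => if k = 0 then X 0 + X 1 else X 0 * X 1

/-- The inner product `∏_{i=k}^{d-k} (iα+(d-i)β)` expressed in `s = X 0`, `p = X 1`. -/
noncomputable def G (d k : ℕ) : MvPolynomial (Fin 2) ℤ :=
  if d < 2 * k then 1
  else if d = 2 * k then C (k : ℤ) * X 0
  else (C ((k : ℤ) * ((d : ℤ) - k)) * X 0 ^ 2 + C (((d : ℤ) - 2 * k) ^ 2) * X 1) * G d (k + 1)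
termination_by d - k
decreasing_by omega

def NN (p : MvPolynomial (Fin 2) ℤ) : Prop := ∀ m, 0 ≤ p.coeff m

lemma NN.mul {p q : MvPolynomial (Fin 2) ℤ} (hp : NN p) (hq : NN q) : NN (p * q) := by
  intro m
  rw [coeff_mul]
  exact Finset.sum_nonneg fun x _ => mul_nonneg (hp _) (hq _)

lemma NN.add {p q : MvPolynomial (Fin 2) ℤ} (hp : NN p) (hq : NN q) : NN (p + q) := by
  intro m; rw [coeff_add]; exact add_nonneg (hp m) (hq m)

lemma NN_C {a : ℤ} (ha : 0 ≤ a) : NN (C a) := by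
  intro m; rw [coeff_C]; split <;> simp [ha]

lemma NN_X (i : Fin 2) : NN (X i) := by
  intro m
  classical
  rw [coeff_X']
  split <;> simp

lemma NN_one : NN (1 : MvPolynomial (Fin 2) ℤ) := by
  intro m; rw [coeff_one]; split <;> norm_num

lemma G_nn (d k : ℕ) : NN (G d k) := by
  rw [G]
  split_ifs with h1 h2
  · exact NN_one
  · exact (NN_C (by positivity)).mul (NN_X 0)
  · refine NN.mul (NN.add ?_ ?_) (G_nn d (k + 1))
    · refine (NN_C ?_).mul ?_
      swap
      · rw [pow_two]; exact (NN_X 0).mul (NN_X 0)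
      have : (k : ℤ) ≤ d := by exact_mod_cast Nat.le_of_lt (by omega : k < d)
      nlinarith [Int.natCast_nonneg k]
    · exact (NN_C (by positivity)).mul (NN_X 1)
termination_by d - k
decreasing_by omega

lemma prod_Icc_split {M : Type*} [CommMonoid M] (f : ℕ → M) {a b : ℕ} (h : a < b) :
    ∏ i ∈ Finset.Icc a b, f i = f a * f b * ∏ i ∈ Finset.Icc (a + 1) (b - 1), f i := by
  have h1 : Finset.Icc a b = insert a (Finset.Icc (a + 1) b) := by
    ext x; simp [Finset.mem_Icc]; omega
  have h2 : Finset.Icc (a + 1) b = insert b (Finset.Icc (a + 1) (b - 1)) := by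
    ext x; simp [Finset.mem_Icc]; omega
  rw [h1, Finset.prod_insert (by simp), h2, Finset.prod_insert (by simp [Finset.mem_Icc]; omega)]
  rw [mul_assoc]

lemma bind₁_G (d k : ℕ) :
    bind₁ σ (G d k) =
      ∏ i ∈ Finset.Icc k (d - k), (C (i : ℤ) * X 0 + C ((d : ℤ) - (i : ℤ)) * X 1) := by
  rw [G]
  split_ifs with h1 h2
  · rw [Finset.Icc_eq_empty (by omega : ¬ k ≤ d - k), Finset.prod_empty, map_one]
  · have : d - k = k := by omega
    rw [this, Finset.Icc_self, Finset.prod_singleton]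
    have hdk : ((d : ℤ) - k) = (k : ℤ) := by
      have : (d : ℤ) = 2 * k := by exact_mod_cast h2
      omega
    have hσ0 : σ 0 = X 0 + X 1 := by norm_num [σ]
    simp only [map_mul, bind₁_C_right, bind₁_X_right, hσ0, hdk]
    ring
  · rw [prod_Icc_split _ (show k < d - k by omega)]
    rw [map_mul, bind₁_G d (k + 1)]
    have hE : d - (k + 1) = d - k - 1 := by omega
    rw [hE]
    have hcast : ((d - k : ℕ) : ℤ) = (d : ℤ) - k := by
      have : k ≤ d := by omega
      push_cast [this]; ring
    have hσ0 : σ 0 = X 0 + X 1 := by norm_num [σ]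
    have hσ1 : σ 1 = X 0 * X 1 := by norm_num [σ]
    simp only [map_add, map_mul, map_pow, map_sub, map_ofNat, bind₁_C_right, bind₁_X_right,
      hσ0, hσ1, hcast]
    ring
termination_by d - k
decreasing_by omega

lemma G_coeff_pos (d k : ℕ) (hk : 1 ≤ k) (h2 : 2 * k ≤ d + 1) :
    0 < (G d k).coeff (Finsupp.single 0 (d + 1 - 2 * k)) := by
  rw [G]
  split_ifs with h1 h2'
  · have : d + 1 - 2 * k = 0 := by omega
    rw [this]
    simp [coeff_one]
  · have : d + 1 - 2 * k = 1 := by omega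
    rw [this, coeff_C_mul, coeff_X]
    have : (0:ℤ) < k := by exact_mod_cast hk
    simpa using this
  · -- n = d + 1 - 2k ≥ 2
    set n := d + 1 - 2 * k with hn
    have hn2 : 2 ≤ n := by omega
    rw [add_mul, coeff_add]
    have hsplit : Finsupp.single (0 : Fin 2) n =
        Finsupp.single 0 1 + (Finsupp.single 0 1 + Finsupp.single 0 (n - 2)) := by
      rw [← Finsupp.single_add, ← Finsupp.single_add]
      congr 1
      omega
    have hterm1 : (C ((k : ℤ) * ((d : ℤ) - k)) * X 0 ^ 2 * G d (k + 1)).coeff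
        (Finsupp.single 0 n) = (k : ℤ) * ((d : ℤ) - k) * (G d (k + 1)).coeff
          (Finsupp.single 0 (n - 2)) := by
      have : C ((k : ℤ) * ((d : ℤ) - k)) * X 0 ^ 2 * G d (k + 1)
          = C ((k : ℤ) * ((d : ℤ) - k)) * (X 0 * (X 0 * G d (k + 1))) := by ring
      rw [this, hsplit, coeff_C_mul, coeff_X_mul, coeff_X_mul]
    have hterm2 : 0 ≤ (C (((d : ℤ) - 2 * k) ^ 2) * X 1 * G d (k + 1)).coeff
        (Finsupp.single 0 n) :=
      (((NN_C (by positivity)).mul (NN_X 1)).mul (G_nn d (k + 1))) _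
    have hrec : 0 < (G d (k + 1)).coeff (Finsupp.single 0 (d + 1 - 2 * (k + 1))) :=
      G_coeff_pos d (k + 1) (by omega) (by omega)
    have hidx : d + 1 - 2 * (k + 1) = n - 2 := by omega
    rw [hidx] at hrec
    have hkd : (k : ℤ) < d := by exact_mod_cast (by omega : k < d)
    have hkpos : (0:ℤ) < k := by exact_mod_cast hk
    have ha : 0 < (k : ℤ) * ((d : ℤ) - k) := by nlinarith
    rw [hterm1]
    nlinarith [mul_pos ha hrec]
termination_by d - k
decreasing_by omega

end ChernAux

open ChernAux in
theorem chern_class_positivity (d : ℕ) (hd : 1 ≤ d) :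
    ∃ F : MvPolynomial (Fin 2) ℤ,
      (∀ mo, 0 ≤ F.coeff mo) ∧
      0 < F.coeff (Finsupp.single 0 (d - 1) + Finsupp.single 1 1) ∧
      MvPolynomial.bind₁
        (fun k : Fin 2 => if k = 0 then X 0 + X 1 else X 0 * X 1) F = cTop d := by
  refine ⟨C ((d : ℤ) ^ 2) * (X 1 * G d 1), ?_, ?_, ?_⟩
  · exact fun mo => ((NN_C (by positivity)).mul ((NN_X 1).mul (G_nn d 1))) mo
  · rw [coeff_C_mul]
    have hm : Finsupp.single (0 : Fin 2) (d - 1) + Finsupp.single 1 1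
        = Finsupp.single 1 1 + Finsupp.single 0 (d - 1) := by rw [add_comm]
    rw [hm, coeff_X_mul]
    have h1 : 0 < (G d 1).coeff (Finsupp.single 0 (d + 1 - 2 * 1)) :=
      G_coeff_pos d 1 le_rfl (by omega)
    have : d + 1 - 2 * 1 = d - 1 := by omega
    rw [this] at h1
    have hd2 : (0:ℤ) < (d : ℤ) ^ 2 := by positivity
    positivity
  · show bind₁ σ _ = _
    rw [map_mul, map_mul, bind₁_C_right, bind₁_X_right, bind₁_G d 1]
    have hσ1 : σ 1 = X 0 * X 1 := by norm_num [σ]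
    rw [hσ1]
    have hIcc : Finset.range (d + 1) = Finset.Icc 0 d := by
      ext x; simp [Finset.mem_Icc, Finset.mem_range]
    rw [cTop, hIcc, prod_Icc_split _ (show 0 < d by omega)]
    simp only [Nat.cast_zero, map_zero, zero_mul, zero_add, sub_zero, sub_self, add_zero,
      zero_add, Nat.zero_add]
    rw [show ((d:ℤ) ^ 2) = (d:ℤ) * (d:ℤ) by ring, C_mul]
    ring
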